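/- Let d ≥ 2, let 0 < δ < π, and let a, b, c, dd ∈ S^d satisfy dist_S(a,b) = δ and dist_S(c,dd) = δ, with a ≠ −dd and b ≠ −c. Suppose a point x lies on both the arc a·dd and the arc b·c, but x does not lie on the arc ab and does not lie on the arc c·dd. Then dist_S(a,dd) > δ or dist_S(b,c) > δ. -/

import Mathlib

open scoped RealInnerProductSpace
open Real

noncomputable section

/-- The unit sphere `S^d` in `E = EuclideanSpace ℝ (Fin (d+1))`. -/
def Sph (d : ℕ) : Set (EuclideanSpace ℝ (Fin (d + 1))) := {x | ‖x‖ = 1}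

/-- Spherical distance of two points of the sphere. -/
def sdist {d : ℕ} (x y : EuclideanSpace ℝ (Fin (d + 1))) : ℝ := Real.arccos ⟪x, y⟫

/-- The arc connecting `a` and `b`. -/
def arc {d : ℕ} (a b : EuclideanSpace ℝ (Fin (d + 1))) :
    Set (EuclideanSpace ℝ (Fin (d + 1))) :=
  {z | ∃ s ∈ Set.Icc (0 : ℝ) 1, z = ‖(1 - s) • a + s • b‖⁻¹ • ((1 - s) • a + s • b)}

/-- The hemisphere `H(c)` with center `c`. -/
def Hemi {d : ℕ} (c : EuclideanSpace ℝ (Fin (d + 1))) :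
    Set (EuclideanSpace ℝ (Fin (d + 1))) :=
  {x ∈ Sph d | 0 ≤ ⟪c, x⟫}

/-- A set on the sphere is spherically convex: it lies on the sphere, contains no pair of
antipodes, and the cone over it is a convex subset of the ambient space. -/
def SphConvex {d : ℕ} (C : Set (EuclideanSpace ℝ (Fin (d + 1)))) : Prop :=
  C ⊆ Sph d ∧ (∀ x ∈ C, -x ∉ C) ∧
    Convex ℝ {y | ∃ t : ℝ, 0 ≤ t ∧ ∃ x ∈ C, y = t • x}

/-- Interior of `C` relative to the sphere `S^d` (interior in the subspace topology). -/
def sphInterior {d : ℕ} (C : Set (EuclideanSpace ℝ (Fin (d + 1)))) :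
    Set (EuclideanSpace ℝ (Fin (d + 1))) :=
  {x ∈ Sph d | ∃ ε > 0, ∀ y ∈ Sph d, dist y x < ε → y ∈ C}

/-- Boundary of a closed set `C ⊆ S^d` relative to the sphere. -/
def sphBoundary {d : ℕ} (C : Set (EuclideanSpace ℝ (Fin (d + 1)))) :
    Set (EuclideanSpace ℝ (Fin (d + 1))) :=
  C \ sphInterior C

/-- A spherical convex body: closed, spherically convex, with nonempty interior in `S^d`. -/
def SphBody {d : ℕ} (C : Set (EuclideanSpace ℝ (Fin (d + 1)))) : Prop :=
  SphConvex C ∧ IsClosed C ∧ (sphInterior C).Nonempty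

/-- `H(c)` supports `C` at `p`. -/
def SupportsAt {d : ℕ} (c : EuclideanSpace ℝ (Fin (d + 1)))
    (C : Set (EuclideanSpace ℝ (Fin (d + 1)))) (p : EuclideanSpace ℝ (Fin (d + 1))) : Prop :=
  c ∈ Sph d ∧ C ⊆ Hemi c ∧ p ∈ C ∧ ⟪c, p⟫ = 0

/-- `H(c)` supports `C` (at some point). -/
def Supports {d : ℕ} (c : EuclideanSpace ℝ (Fin (d + 1)))
    (C : Set (EuclideanSpace ℝ (Fin (d + 1)))) : Prop :=
  ∃ p, SupportsAt c C p

/-- The width of `C` determined by the supporting hemisphere `H(a)`: the infimum of the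
thicknesses `π - arccos ⟪a, b⟫` of the lunes `H(a) ∩ H(b)` containing `C`. -/
def widthAt {d : ℕ} (a : EuclideanSpace ℝ (Fin (d + 1)))
    (C : Set (EuclideanSpace ℝ (Fin (d + 1)))) : ℝ :=
  sInf {w | ∃ b ∈ Sph d, b ≠ a ∧ b ≠ -a ∧ C ⊆ Hemi b ∧ w = π - Real.arccos ⟪a, b⟫}

/-- `C` is of constant width `w`. -/
def ConstWidth {d : ℕ} (C : Set (EuclideanSpace ℝ (Fin (d + 1)))) (w : ℝ) : Prop :=
  ∀ a, Supports a C → widthAt a C = w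

/-- The diameter of `C`. -/
def sphDiam {d : ℕ} (C : Set (EuclideanSpace ℝ (Fin (d + 1)))) : ℝ :=
  sSup {r | ∃ x ∈ C, ∃ y ∈ C, r = sdist x y}

/-- `C` is of constant diameter `δ`. -/
def ConstDiam {d : ℕ} (C : Set (EuclideanSpace ℝ (Fin (d + 1)))) (δ : ℝ) : Prop :=
  sphDiam C = δ ∧ ∀ p ∈ sphBoundary C, ∃ p' ∈ sphBoundary C, sdist p p' = δ

/-- A boundary point `p` of `C` is smooth if exactly one hemisphere supports `C` at `p`. -/
def SmoothPoint {d : ℕ} (C : Set (EuclideanSpace ℝ (Fin (d + 1))))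
    (p : EuclideanSpace ℝ (Fin (d + 1))) : Prop :=
  ∃! c, SupportsAt c C p

/-- A smooth spherical convex body: every boundary point is smooth. -/
def SmoothBody {d : ℕ} (C : Set (EuclideanSpace ℝ (Fin (d + 1)))) : Prop :=
  ∀ p ∈ sphBoundary C, SmoothPoint C p

/-- `C` is strictly convex: its boundary contains no nondegenerate arc. -/
def StrictlySphConvex {d : ℕ} (C : Set (EuclideanSpace ℝ (Fin (d + 1)))) : Prop :=
  ∀ a ∈ sphBoundary C, ∀ b ∈ sphBoundary C, a ≠ b → b ≠ -a →
    ¬ (arc a b ⊆ sphBoundary C)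

/-- The polar of `C`. -/
def sphPolar {d : ℕ} (C : Set (EuclideanSpace ℝ (Fin (d + 1)))) :
    Set (EuclideanSpace ℝ (Fin (d + 1))) :=
  {r ∈ Sph d | C ⊆ Hemi r}


section MyHelpers


lemma sc1 {s c N : ℝ} (hc0 : -1 ≤ c) (hc1 : c ≤ 1)
    (hN2 : N^2 = 1 - 2*s*(1-s)*(1-c)) (hNpos : 0 < N) :
    1 - (N⁻¹ * ((1-s) + s*c))^2 = (s * Real.sqrt (1-c^2) * N⁻¹)^2 := by
  have hsq : Real.sqrt (1-c^2)^2 = 1 - c^2 := Real.sq_sqrt (by nlinarith)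
  have hNne : N ≠ 0 := hNpos.ne'
  field_simp
  linear_combination hN2 - s^2 * hsq

lemma sc2 {s c N : ℝ} (hc0 : -1 ≤ c) (hc1 : c ≤ 1)
    (hN2 : N^2 = 1 - 2*s*(1-s)*(1-c)) (hNpos : 0 < N) :
    1 - (N⁻¹ * ((1-s)*c + s))^2 = ((1-s) * Real.sqrt (1-c^2) * N⁻¹)^2 := by
  have hsq : Real.sqrt (1-c^2)^2 = 1 - c^2 := Real.sq_sqrt (by nlinarith)
  have hNne : N ≠ 0 := hNpos.ne'
  field_simp
  linear_combination hN2 - (1-s)^2 * hsq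

lemma sc3 {s c N : ℝ} (hc0 : -1 ≤ c) (hc1 : c ≤ 1)
    (hN2 : N^2 = 1 - 2*s*(1-s)*(1-c)) (hNpos : 0 < N) :
    (N⁻¹ * ((1-s) + s*c)) * (N⁻¹ * ((1-s)*c + s))
      - (s * Real.sqrt (1-c^2) * N⁻¹) * ((1-s) * Real.sqrt (1-c^2) * N⁻¹) = c := by
  have hsq : Real.sqrt (1-c^2)^2 = 1 - c^2 := Real.sq_sqrt (by nlinarith)
  have hNne : N ≠ 0 := hNpos.ne'
  field_simp
  linear_combination (-c) * hN2 - s*(1-s) * hsq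


variable {F : Type*} [NormedAddCommGroup F] [InnerProductSpace ℝ F]


lemma my_arccos_antitone : Antitone Real.arccos := fun x y h => by
  simp only [Real.arccos]
  linarith [Real.monotone_arcsin h]

lemma my_inner_le_one {u v : F} (hu : ‖u‖ = 1) (hv : ‖v‖ = 1) : ⟪u, v⟫ ≤ 1 := by
  have := real_inner_le_norm u v; rw [hu, hv] at this; linarith

lemma my_neg_one_le_inner {u v : F} (hu : ‖u‖ = 1) (hv : ‖v‖ = 1) : -1 ≤ ⟪u, v⟫ := by
  have := abs_real_inner_le_norm u v; rw [hu, hv] at this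
  have := abs_le.1 this; linarith [this.1]

lemma my_neg_one_lt_inner {u v : F} (hu : ‖u‖ = 1) (hv : ‖v‖ = 1) (h : v ≠ -u) :
    -1 < ⟪u, v⟫ := by
  rcases lt_or_eq_of_le (my_neg_one_le_inner hu hv) with h' | h'
  · exact h'
  · exfalso; apply h
    have h2 : ‖u + v‖ ^ 2 = 0 := by
      rw [norm_add_sq_real, hu, hv, ← h']; ring
    have h3 : u + v = 0 := by
      have := pow_eq_zero_iff (n := 2) (by norm_num) |>.1 h2
      simpa [norm_eq_zero] using this
    exact eq_neg_of_add_eq_zero_right h3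

lemma my_norm_ortho {u v : F} (hu : ‖u‖ = 1) (hv : ‖v‖ = 1) :
    ‖u - ⟪u, v⟫ • v‖ ^ 2 = 1 - ⟪u, v⟫ ^ 2 := by
  rw [norm_sub_sq_real, real_inner_smul_right, norm_smul, hu, hv, Real.norm_eq_abs,
    mul_one, one_pow, sq_abs]
  ring

lemma my_inner_ortho {u v w : F} (hv : ‖v‖ = 1) :
    ⟪u - ⟪u, v⟫ • v, w - ⟪v, w⟫ • v⟫ = ⟪u, w⟫ - ⟪u, v⟫ * ⟪v, w⟫ := by
  have hvv : ⟪v, v⟫ = (1:ℝ) := by rw [real_inner_self_eq_norm_sq, hv]; norm_num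
  simp only [inner_sub_left, inner_sub_right, real_inner_smul_left, real_inner_smul_right, hvv]
  rw [real_inner_comm v u]; ring

/-- Key inequality: `cos (∠uv + ∠vw) ≤ ⟪u,w⟫` for unit vectors. -/
lemma my_cos_add_le {u v w : F} (hu : ‖u‖ = 1) (hv : ‖v‖ = 1) (hw : ‖w‖ = 1) :
    Real.cos (Real.arccos ⟪u, v⟫ + Real.arccos ⟪v, w⟫) ≤ ⟪u, w⟫ := by
  have hqp := my_inner_ortho (u := u) (w := w) hv
  have hnq := my_norm_ortho hu hv
  have hnp : ‖w - ⟪v, w⟫ • v‖ ^ 2 = 1 - ⟪v, w⟫ ^ 2 := by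
    rw [real_inner_comm w v] at *; exact my_norm_ortho hw hv
  have hsinb : Real.sin (Real.arccos ⟪u, v⟫) = ‖u - ⟪u, v⟫ • v‖ := by
    rw [Real.sin_arccos, ← hnq, Real.sqrt_sq (norm_nonneg _)]
  have hsing : Real.sin (Real.arccos ⟪v, w⟫) = ‖w - ⟪v, w⟫ • v‖ := by
    rw [Real.sin_arccos, ← hnp, Real.sqrt_sq (norm_nonneg _)]
  rw [Real.cos_add, hsinb, hsing,
    Real.cos_arccos (my_neg_one_le_inner hu hv) (my_inner_le_one hu hv),
    Real.cos_arccos (my_neg_one_le_inner hv hw) (my_inner_le_one hv hw)]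
  have hCS := (abs_le.1 (abs_real_inner_le_norm (u - ⟪u, v⟫ • v) (w - ⟪v, w⟫ • v))).1
  linarith

/-- Spherical triangle inequality for unit vectors. -/
lemma my_arccos_triangle {u v w : F} (hu : ‖u‖ = 1) (hv : ‖v‖ = 1) (hw : ‖w‖ = 1) :
    Real.arccos ⟪u, w⟫ ≤ Real.arccos ⟪u, v⟫ + Real.arccos ⟪v, w⟫ := by
  have hβ0 : 0 ≤ Real.arccos ⟪u, v⟫ := Real.arccos_nonneg _
  have hγ0 : 0 ≤ Real.arccos ⟪v, w⟫ := Real.arccos_nonneg _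
  rcases le_or_gt π (Real.arccos ⟪u, v⟫ + Real.arccos ⟪v, w⟫) with h | h
  · linarith [Real.arccos_le_pi ⟪u, w⟫]
  · have h1 := my_cos_add_le hu hv hw
    calc Real.arccos ⟪u, w⟫ ≤ Real.arccos (Real.cos (Real.arccos ⟪u, v⟫ + Real.arccos ⟪v, w⟫)) :=
          my_arccos_antitone h1
      _ = _ := Real.arccos_cos (by linarith) (by linarith)

/-- Equality case of the spherical triangle inequality. -/
lemma my_eq_case {u v w : F} (hu : ‖u‖ = 1) (hv : ‖v‖ = 1) (hw : ‖w‖ = 1)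
    (heq : Real.arccos ⟪u, v⟫ + Real.arccos ⟪v, w⟫ = Real.arccos ⟪u, w⟫)
    (hlt : Real.arccos ⟪u, w⟫ < π) :
    ∃ lam mu : ℝ, 0 ≤ lam ∧ 0 ≤ mu ∧ v = lam • u + mu • w := by
  have hqp := my_inner_ortho (u := u) (w := w) hv
  have hnq := my_norm_ortho hu hv
  have hnp : ‖w - ⟪v, w⟫ • v‖ ^ 2 = 1 - ⟪v, w⟫ ^ 2 := by
    rw [real_inner_comm w v] at *; exact my_norm_ortho hw hv
  have hsinb : Real.sin (Real.arccos ⟪u, v⟫) = ‖u - ⟪u, v⟫ • v‖ := by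
    rw [Real.sin_arccos, ← hnq, Real.sqrt_sq (norm_nonneg _)]
  have hsing : Real.sin (Real.arccos ⟪v, w⟫) = ‖w - ⟪v, w⟫ • v‖ := by
    rw [Real.sin_arccos, ← hnp, Real.sqrt_sq (norm_nonneg _)]
  have hβ0 : 0 ≤ Real.arccos ⟪u, v⟫ := Real.arccos_nonneg _
  have hγ0 : 0 ≤ Real.arccos ⟪v, w⟫ := Real.arccos_nonneg _
  have hβπ : Real.arccos ⟪u, v⟫ < π := by linarith
  have hγπ : Real.arccos ⟪v, w⟫ < π := by linarith
  have hcosD : Real.cos (Real.arccos ⟪u, v⟫ + Real.arccos ⟪v, w⟫) = ⟪u, w⟫ := by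
    rw [heq]; exact Real.cos_arccos (my_neg_one_le_inner hu hw) (my_inner_le_one hu hw)
  have hkey : ⟪u - ⟪u, v⟫ • v, w - ⟪v, w⟫ • v⟫
      = -(‖u - ⟪u, v⟫ • v‖ * ‖w - ⟪v, w⟫ • v‖) := by
    rw [Real.cos_add, hsinb, hsing,
      Real.cos_arccos (my_neg_one_le_inner hu hv) (my_inner_le_one hu hv),
      Real.cos_arccos (my_neg_one_le_inner hv hw) (my_inner_le_one hv hw)] at hcosD
    linarith
  rcases eq_or_lt_of_le (norm_nonneg (u - ⟪u, v⟫ • v)) with hq0 | hq0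
  · -- u - ⟪u,v⟫ • v = 0, so ⟪u,v⟫ = ±1; -1 impossible
    have hc2 : ⟪u, v⟫ ^ 2 = 1 := by
      have h0 : (1:ℝ) - ⟪u, v⟫ ^ 2 = 0 := by rw [← hnq, ← hq0]; ring
      linarith
    have hcases : ⟪u, v⟫ = 1 ∨ ⟪u, v⟫ = -1 := by
      have : (⟪u, v⟫ - 1) * (⟪u, v⟫ + 1) = 0 := by nlinarith
      rcases mul_eq_zero.1 this with h | h
      · left; linarith
      · right; linarith
    rcases hcases with h1 | h1
    · -- u = v
      have huv : u = v := by
        have : ‖u - v‖ ^ 2 = 0 := by rw [norm_sub_sq_real, hu, hv, h1]; ring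
        have := pow_eq_zero_iff (n := 2) (by norm_num) |>.1 this
        have := norm_eq_zero.1 this
        exact sub_eq_zero.1 this
      exact ⟨1, 0, by norm_num, by norm_num, by rw [← huv]; simp⟩
    · exfalso
      rw [h1] at hβπ
      rw [Real.arccos_neg_one] at hβπ
      exact lt_irrefl _ hβπ
  · rcases eq_or_lt_of_le (norm_nonneg (w - ⟪v, w⟫ • v)) with hp0 | hp0
    · have hc2 : ⟪v, w⟫ ^ 2 = 1 := by
        have h0 : (1:ℝ) - ⟪v, w⟫ ^ 2 = 0 := by rw [← hnp, ← hp0]; ring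
        linarith
      have hcases : ⟪v, w⟫ = 1 ∨ ⟪v, w⟫ = -1 := by
        have : (⟪v, w⟫ - 1) * (⟪v, w⟫ + 1) = 0 := by nlinarith
        rcases mul_eq_zero.1 this with h | h
        · left; linarith
        · right; linarith
      rcases hcases with h1 | h1
      · have hvw : v = w := by
          have : ‖v - w‖ ^ 2 = 0 := by rw [norm_sub_sq_real, hv, hw, h1]; ring
          have := pow_eq_zero_iff (n := 2) (by norm_num) |>.1 this
          have := norm_eq_zero.1 this
          exact sub_eq_zero.1 this
        exact ⟨0, 1, by norm_num, by norm_num, by rw [hvw]; simp⟩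
      · exfalso
        rw [h1, Real.arccos_neg_one] at hγπ
        exact lt_irrefl _ hγπ
    · -- Cauchy-Schwarz equality with antiparallel vectors
      set q : F := u - ⟪u, v⟫ • v with hqdef
      set p : F := w - ⟪v, w⟫ • v with hpdef
      have heqcs : ⟪q, -p⟫ = ‖q‖ * ‖-p‖ := by
        rw [inner_neg_right, norm_neg, hkey]; ring
      have hpar : ‖-p‖ • q = ‖q‖ • (-p) := inner_eq_norm_mul_iff_real.1 heqcs
      rw [norm_neg] at hpar
      -- S := sin(β+γ) > 0
      set S : ℝ := ‖p‖ * ⟪u, v⟫ + ‖q‖ * ⟪v, w⟫ with hSdef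
      have hβpos : 0 < Real.arccos ⟪u, v⟫ := by
        rw [Real.arccos_pos]
        by_contra h
        push_neg at h
        have h1 : ⟪u, v⟫ = 1 := le_antisymm (my_inner_le_one hu hv) h
        rw [h1] at hnq; norm_num at hnq
        rw [hnq] at hq0; simp at hq0
      have hSsin : S = Real.sin (Real.arccos ⟪u, v⟫ + Real.arccos ⟪v, w⟫) := by
        rw [Real.sin_add, hsinb, hsing,
          Real.cos_arccos (my_neg_one_le_inner hu hv) (my_inner_le_one hu hv),
          Real.cos_arccos (my_neg_one_le_inner hv hw) (my_inner_le_one hv hw), hSdef]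
        ring
      have hSpos : 0 < S := by
        rw [hSsin]
        exact Real.sin_pos_of_pos_of_lt_pi (by linarith) (by rw [heq]; exact hlt)
      have hv' : S • v = ‖p‖ • u + ‖q‖ • w := by
        have h2 : ‖p‖ • (u - ⟪u, v⟫ • v) = ‖q‖ • (-(w - ⟪v, w⟫ • v)) := hpar
        rw [hSdef]
        have := h2
        simp only [smul_sub, smul_neg, smul_smul] at this
        linear_combination (norm := module) -this
      refine ⟨S⁻¹ * ‖p‖, S⁻¹ * ‖q‖, by positivity, by positivity, ?_⟩
      have : v = S⁻¹ • (S • v) := by rw [smul_smul, inv_mul_cancel₀ hSpos.ne']; simp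
      rw [this, hv', smul_add, smul_smul, smul_smul]


lemma my_arc_spec_gen {a b : F} (ha : ‖a‖ = 1) (hb : ‖b‖ = 1) (hcm : -1 < ⟪a, b⟫)
    {s : ℝ} (hs0 : 0 ≤ s) (hs1 : s ≤ 1) :
    ‖‖(1-s) • a + s • b‖⁻¹ • ((1-s) • a + s • b)‖ = 1 ∧
    Real.arccos ⟪a, ‖(1-s) • a + s • b‖⁻¹ • ((1-s) • a + s • b)⟫ +
      Real.arccos ⟪‖(1-s) • a + s • b‖⁻¹ • ((1-s) • a + s • b), b⟫ = Real.arccos ⟪a, b⟫ := by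
  have hc1 : ⟪a, b⟫ ≤ 1 := my_inner_le_one ha hb
  set y : F := (1-s) • a + s • b with hydef
  have hN2 : ‖y‖ ^ 2 = 1 - 2*s*(1-s)*(1-⟪a,b⟫) := by
    rw [hydef, norm_add_sq_real, norm_smul, norm_smul, real_inner_smul_left,
      real_inner_smul_right, ha, hb, Real.norm_eq_abs, Real.norm_eq_abs,
      abs_of_nonneg hs0, abs_of_nonneg (by linarith : (0:ℝ) ≤ 1 - s)]
    ring
  have hN2pos : 0 < ‖y‖ ^ 2 := by nlinarith [sq_nonneg (2*s - 1)]
  have hNpos : 0 < ‖y‖ :=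
    lt_of_le_of_ne (norm_nonneg y) (fun h => by rw [← h] at hN2pos; norm_num at hN2pos)
  have hxn : ‖‖y‖⁻¹ • y‖ = 1 := by
    rw [norm_smul, Real.norm_eq_abs, abs_of_pos (inv_pos.2 hNpos), inv_mul_cancel₀ hNpos.ne']
  refine ⟨hxn, ?_⟩
  have haa : ⟪a, a⟫ = (1:ℝ) := by rw [real_inner_self_eq_norm_sq, ha]; norm_num
  have hbb : ⟪b, b⟫ = (1:ℝ) := by rw [real_inner_self_eq_norm_sq, hb]; norm_num
  have hia : ⟪a, ‖y‖⁻¹ • y⟫ = ‖y‖⁻¹ * ((1-s) + s * ⟪a,b⟫) := by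
    rw [real_inner_smul_right, hydef, inner_add_right, real_inner_smul_right,
      real_inner_smul_right, haa]
    ring
  have hib : ⟪‖y‖⁻¹ • y, b⟫ = ‖y‖⁻¹ * ((1-s) * ⟪a,b⟫ + s) := by
    rw [real_inner_smul_left, hydef, inner_add_left, real_inner_smul_left,
      real_inner_smul_left, hbb]
    ring
  have hsina : Real.sin (Real.arccos ⟪a, ‖y‖⁻¹ • y⟫)
      = s * Real.sqrt (1 - ⟪a,b⟫^2) * ‖y‖⁻¹ := by
    rw [Real.sin_arccos, hia, sc1 (le_of_lt hcm) hc1 hN2 hNpos]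
    exact Real.sqrt_sq (by
      apply mul_nonneg (mul_nonneg hs0 (Real.sqrt_nonneg _)) (inv_pos.2 hNpos).le)
  have hsinb : Real.sin (Real.arccos ⟪‖y‖⁻¹ • y, b⟫)
      = (1-s) * Real.sqrt (1 - ⟪a,b⟫^2) * ‖y‖⁻¹ := by
    rw [Real.sin_arccos, hib, sc2 (le_of_lt hcm) hc1 hN2 hNpos]
    exact Real.sqrt_sq (by
      apply mul_nonneg (mul_nonneg (by linarith) (Real.sqrt_nonneg _)) (inv_pos.2 hNpos).le)
  have hcosa := Real.cos_arccos (my_neg_one_le_inner ha hxn) (my_inner_le_one ha hxn)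
  have hcosb := Real.cos_arccos (my_neg_one_le_inner hxn hb) (my_inner_le_one hxn hb)
  have hβ0 : 0 ≤ Real.arccos ⟪a, ‖y‖⁻¹ • y⟫ := Real.arccos_nonneg _
  have hγ0 : 0 ≤ Real.arccos ⟪‖y‖⁻¹ • y, b⟫ := Real.arccos_nonneg _
  have hβπ : Real.arccos ⟪a, ‖y‖⁻¹ • y⟫ ≤ π := Real.arccos_le_pi _
  have hγπ : Real.arccos ⟪‖y‖⁻¹ • y, b⟫ ≤ π := Real.arccos_le_pi _
  have hcosD : Real.cos (Real.arccos ⟪a, ‖y‖⁻¹ • y⟫ + Real.arccos ⟪‖y‖⁻¹ • y, b⟫) = ⟪a, b⟫ := by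
    rw [Real.cos_add, hcosa, hcosb, hsina, hsinb, hia, hib]
    exact sc3 (le_of_lt hcm) hc1 hN2 hNpos
  have hsumlt : Real.arccos ⟪a, ‖y‖⁻¹ • y⟫ + Real.arccos ⟪‖y‖⁻¹ • y, b⟫ < π := by
    by_contra h
    push_neg at h
    have h1 : Real.cos (Real.arccos ⟪‖y‖⁻¹ • y, b⟫)
        ≤ Real.cos (π - Real.arccos ⟪a, ‖y‖⁻¹ • y⟫) :=
      Real.cos_le_cos_of_nonneg_of_le_pi (by linarith) hγπ (by linarith)
    rw [Real.cos_pi_sub, hcosa, hcosb, hia, hib] at h1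
    have h2 : 0 < ‖y‖⁻¹ * (1 + ⟪a,b⟫) := by
      have : (0:ℝ) < 1 + ⟪a,b⟫ := by linarith
      positivity
    nlinarith
  rw [← hcosD, Real.arccos_cos (by linarith) (by linarith)]

lemma my_mem_arc {d : ℕ} {a b x : EuclideanSpace ℝ (Fin (d+1))} (hx : ‖x‖ = 1)
    {lam mu : ℝ} (hl : 0 ≤ lam) (hm : 0 ≤ mu) (hxe : x = lam • a + mu • b) :
    x ∈ arc a b := by
  have hS : 0 < lam + mu := by
    rcases lt_or_eq_of_le (by linarith : (0:ℝ) ≤ lam + mu) with h | h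
    · exact h
    · exfalso
      have hl0 : lam = 0 := by linarith
      have hm0 : mu = 0 := by linarith
      rw [hl0, hm0] at hxe; simp at hxe; rw [hxe] at hx; simp at hx
  refine ⟨mu / (lam + mu), ⟨by positivity, by rw [div_le_one hS]; linarith⟩, ?_⟩
  have hy : (1 - mu/(lam+mu)) • a + (mu/(lam+mu)) • b = (lam+mu)⁻¹ • x := by
    rw [hxe]
    match_scalars <;> field_simp <;> ring
  rw [hy, norm_smul, Real.norm_eq_abs, abs_of_pos (inv_pos.2 hS), hx, mul_one, inv_inv,
    smul_smul, mul_inv_cancel₀ hS.ne', one_smul]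

lemma my_arc_spec {d : ℕ} {a b : EuclideanSpace ℝ (Fin (d+1))} (ha : ‖a‖ = 1) (hb : ‖b‖ = 1)
    (hcm : -1 < ⟪a, b⟫) {x : EuclideanSpace ℝ (Fin (d+1))} (hx : x ∈ arc a b) :
    ‖x‖ = 1 ∧ Real.arccos ⟪a, x⟫ + Real.arccos ⟪x, b⟫ = Real.arccos ⟪a, b⟫ := by
  obtain ⟨s, ⟨hs0, hs1⟩, rfl⟩ := hx
  exact my_arc_spec_gen ha hb hcm hs0 hs1

end MyHelpers

/-- if the diagonals `a·dd` and `b·c` of the spherical quadrangle meet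
at a point `x` lying outside the sides `ab` and `c·dd` of length `δ`, then one of the
diagonals is longer than `δ`. -/
theorem quadrangle_diagonal_long (d : ℕ) (hd : 2 ≤ d) (δ : ℝ)
    (hδ0 : 0 < δ) (hδπ : δ < π)
    (a b c dd : EuclideanSpace ℝ (Fin (d + 1)))
    (ha : a ∈ Sph d) (hb : b ∈ Sph d) (hc : c ∈ Sph d) (hdd : dd ∈ Sph d)
    (hab : sdist a b = δ) (hcdd : sdist c dd = δ)
    (hadd : a ≠ -dd) (hbc : b ≠ -c)
    (x : EuclideanSpace ℝ (Fin (d + 1)))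
    (hx1 : x ∈ arc a dd) (hx2 : x ∈ arc b c)
    (hx3 : x ∉ arc a b) (hx4 : x ∉ arc c dd) :
    δ < sdist a dd ∨ δ < sdist b c := by
  by_contra hcon
  push_neg at hcon
  obtain ⟨h1, h2⟩ := hcon
  have ha' : ‖a‖ = 1 := ha
  have hb' : ‖b‖ = 1 := hb
  have hc' : ‖c‖ = 1 := hc
  have hdd' : ‖dd‖ = 1 := hdd
  have haddi : -1 < ⟪a, dd⟫ :=
    my_neg_one_lt_inner ha' hdd' (fun h => hadd (by rw [h]; simp))
  have hbci : -1 < ⟪b, c⟫ :=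
    my_neg_one_lt_inner hb' hc' (fun h => hbc (by rw [h]; simp))
  obtain ⟨hxn, hadd2⟩ := my_arc_spec ha' hdd' haddi hx1
  obtain ⟨-, hbc2⟩ := my_arc_spec hb' hc' hbci hx2
  have t1 : Real.arccos ⟪a, b⟫ ≤ Real.arccos ⟪a, x⟫ + Real.arccos ⟪x, b⟫ :=
    my_arccos_triangle ha' hxn hb'
  have t2 : Real.arccos ⟪c, dd⟫ ≤ Real.arccos ⟪c, x⟫ + Real.arccos ⟪x, dd⟫ :=
    my_arccos_triangle hc' hxn hdd'
  simp only [sdist] at hab hcdd h1 h2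
  have hxb : (⟪x, b⟫ : ℝ) = ⟪b, x⟫ := real_inner_comm b x
  have hcx : (⟪c, x⟫ : ℝ) = ⟪x, c⟫ := real_inner_comm x c
  rw [hxb] at t1
  rw [hcx] at t2
  have heq : Real.arccos ⟪a, x⟫ + Real.arccos ⟪x, b⟫ = Real.arccos ⟪a, b⟫ := by
    rw [hxb, hab]
    linarith
  have hlt : Real.arccos ⟪a, b⟫ < π := by rw [hab]; exact hδπ
  obtain ⟨lam, mu, hl, hm, hxe⟩ := my_eq_case ha' hxn hb' heq hlt
  exact hx3 (my_mem_arc hxn hl hm hxe)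


end
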